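/- Assume the SICA parameters are positive and the incidence function f satisfies (H1)–(H3). If R₀ ≤ 1, then the only solution (S,I,C,A) of the equilibrium system with S, I, C, A ≥ 0 is the disease-free equilibrium E_f = (Λ/μ, 0, 0, 0). -/

import Mathlib

/- STATEMENT 8: Assume positive SICA parameters and f satisfying (H1)–(H3).
If R₀ ≤ 1, the only nonnegative solution of the equilibrium system is the
disease-free equilibrium E_f = (Λ/μ, 0, 0, 0). -/
theorem stmt_8 (Λ μ ρ φ σ ω d ξ₁ ξ₂ ξ₃ D S₀ R₀ : ℝ)
    (hΛ : 0 < Λ) (hμ : 0 < μ) (hρ : 0 < ρ) (hφ : 0 < φ) (hσ : 0 < σ)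
    (hω : 0 < ω) (hd : 0 < d)
    (hξ₁ : ξ₁ = ρ + φ + μ) (hξ₂ : ξ₂ = ω + μ) (hξ₃ : ξ₃ = σ + μ + d)
    (hD : D = μ * (ξ₂ * (ξ₃ + ρ) + φ * ξ₃ + ρ * d) + ρ * ω * d)
    (hS₀ : S₀ = Λ / μ)
    (f : ℝ → ℝ → ℝ)
    (hR₀def : R₀ = f S₀ 0 * ξ₂ * ξ₃ / D)
    (hR₀ : R₀ ≤ 1)
    (hf_nonneg : ∀ S I : ℝ, 0 ≤ S → 0 ≤ I → 0 ≤ f S I)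
    (hf_cont : ContinuousOn (fun p : ℝ × ℝ => f p.1 p.2) (Set.Ici 0 ×ˢ Set.Ici 0))
    (hf_cd : ContDiffOn ℝ 1 (fun p : ℝ × ℝ => f p.1 p.2) (Set.Ioi 0 ×ˢ Set.Ioi 0))
    (hH1 : ∀ I : ℝ, 0 ≤ I → f 0 I = 0)
    (hH2 : ∀ S I : ℝ, 0 < S → 0 ≤ I → 0 < deriv (fun s => f s I) S)
    (hH3 : ∀ S I : ℝ, 0 ≤ S → 0 ≤ I → deriv (fun i => f S i) I ≤ 0) :
    ∀ S I C A : ℝ, 0 ≤ S → 0 ≤ I → 0 ≤ C → 0 ≤ A →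
      Λ - μ * S - f S I * I = 0 →
      f S I * I - ξ₁ * I + σ * A + ω * C = 0 →
      φ * I - ξ₂ * C = 0 →
      ρ * I - ξ₃ * A = 0 →
      S = Λ / μ ∧ I = 0 ∧ C = 0 ∧ A = 0 := by
  intro S I C A hS hI hC hA e1 e2 e3 e4
  have hξ₂pos : 0 < ξ₂ := by rw [hξ₂]; linarith
  have hξ₃pos : 0 < ξ₃ := by rw [hξ₃]; linarith
  have hDpos : 0 < D := by
    rw [hD, hξ₂, hξ₃]; positivity
  rcases hI.eq_or_lt with hI0 | hIpos
  · subst hI0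
    refine ⟨by field_simp; nlinarith [e1], rfl, ?_, ?_⟩
    · nlinarith [e3]
    · nlinarith [e4]
  · exfalso
    have hInz : I ≠ 0 := ne_of_gt hIpos
    -- S > 0
    have hSpos : 0 < S := by
      rcases hS.eq_or_lt with h0 | h
      · exfalso
        rw [← h0] at e1
        rw [hH1 I hI] at e1
        nlinarith
      · exact h
    -- key: f S I * (ξ₂ * ξ₃) = D
    have hA' : ξ₃ * A = ρ * I := by linarith
    have hC' : ξ₂ * C = φ * I := by linarith
    have hkey : f S I * (ξ₂ * ξ₃) = D := by
      have e2' : f S I * I = ξ₁ * I - σ * A - ω * C := by linarith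
      have h5 : f S I * (ξ₂ * ξ₃) * I = D * I := by
        have : f S I * (ξ₂ * ξ₃) * I =
            ξ₁ * ξ₂ * ξ₃ * I - σ * ξ₂ * (ξ₃ * A) - ω * ξ₃ * (ξ₂ * C) := by
          rw [show f S I * (ξ₂ * ξ₃) * I = f S I * I * (ξ₂ * ξ₃) by ring, e2']; ring
        rw [this, hA', hC', hξ₁, hξ₂, hξ₃, hD, hξ₂, hξ₃]; ring
      exact mul_right_cancel₀ hInz h5
    have hfpos : 0 < f S I := by
      by_contra hle
      push_neg at hle
      have h2 : f S I * (ξ₂ * ξ₃) ≤ 0 :=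
        mul_nonpos_iff.mpr (Or.inr ⟨hle, (mul_pos hξ₂pos hξ₃pos).le⟩)
      linarith
    -- S < S₀
    have hSlt : S < S₀ := by
      rw [hS₀, lt_div_iff₀ hμ]
      have := mul_pos hfpos hIpos
      linarith
    have hS₀pos : 0 < S₀ := lt_trans hSpos hSlt
    -- f S I ≤ f S 0
    have hanti : f S I ≤ f S 0 := by
      have hcont : ContinuousOn (fun i => f S i) (Set.Icc 0 I) := by
        have : ContinuousOn ((fun p : ℝ × ℝ => f p.1 p.2) ∘ fun i => (S, i))
            (Set.Icc 0 I) := by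
          apply hf_cont.comp ((continuous_const.prodMk continuous_id).continuousOn)
          intro x hx
          exact ⟨hS, hx.1⟩
        exact this
      have hdiff : DifferentiableOn ℝ (fun i => f S i) (interior (Set.Icc 0 I)) := by
        rw [interior_Icc]
        intro x hx
        have hmem : (S, x) ∈ Set.Ioi (0:ℝ) ×ˢ Set.Ioi (0:ℝ) := ⟨hSpos, hx.1⟩
        have hopen : IsOpen (Set.Ioi (0:ℝ) ×ˢ Set.Ioi (0:ℝ)) :=
          isOpen_Ioi.prod isOpen_Ioi
        have hda : DifferentiableAt ℝ (fun p : ℝ × ℝ => f p.1 p.2) (S, x) :=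
          (hf_cd.differentiableOn one_ne_zero).differentiableAt (hopen.mem_nhds hmem)
        have : DifferentiableAt ℝ ((fun p : ℝ × ℝ => f p.1 p.2) ∘ fun i => (S, i)) x :=
          hda.comp x (DifferentiableAt.prodMk (differentiableAt_const S) differentiableAt_id)
        exact this.differentiableWithinAt
      have hmono := antitoneOn_of_deriv_nonpos (convex_Icc 0 I) hcont hdiff
        (fun x hx => by
          rw [interior_Icc] at hx
          exact hH3 S x hS hx.1.le)
      exact hmono (Set.left_mem_Icc.2 hI) (Set.right_mem_Icc.2 hI) hI
    -- f S 0 < f S₀ 0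
    have hmono : f S 0 < f S₀ 0 := by
      have hcont : ContinuousOn (fun s => f s 0) (Set.Icc S S₀) := by
        have : ContinuousOn ((fun p : ℝ × ℝ => f p.1 p.2) ∘ fun s => (s, (0:ℝ)))
            (Set.Icc S S₀) := by
          apply hf_cont.comp ((continuous_id.prodMk continuous_const).continuousOn)
          intro x hx
          exact ⟨le_trans hS hx.1, by norm_num⟩
        exact this
      have hsm := strictMonoOn_of_deriv_pos (convex_Icc S S₀) hcont
        (fun x hx => by
          rw [interior_Icc] at hx
          exact hH2 x 0 (lt_trans hSpos hx.1) le_rfl)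
      exact hsm (Set.left_mem_Icc.2 hSlt.le) (Set.right_mem_Icc.2 hSlt.le) hSlt
    -- R₀ ≤ 1 gives f S₀ 0 * ξ₂ * ξ₃ ≤ D
    have hR : f S₀ 0 * ξ₂ * ξ₃ ≤ D := by
      rw [hR₀def, div_le_one hDpos] at hR₀
      exact hR₀
    have hpos23 := mul_pos hξ₂pos hξ₃pos
    have c1 : f S I * (ξ₂ * ξ₃) ≤ f S 0 * (ξ₂ * ξ₃) :=
      mul_le_mul_of_nonneg_right hanti hpos23.le
    have c2 : f S 0 * (ξ₂ * ξ₃) < f S₀ 0 * (ξ₂ * ξ₃) :=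
      mul_lt_mul_of_pos_right hmono hpos23
    have hR' : f S₀ 0 * (ξ₂ * ξ₃) ≤ D := by rw [← mul_assoc]; exact hR
    linarith
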